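/- arXiv:1901.00315 — 2 statements merged into one kernel-verified Lean document; each statement's English description precedes it below -/
import Mathlib

section
/- Let x ∈ C^ν(I, ℝ^m) be ν-Hölder continuous on a compact interval I. Fix α ∈ (0, ν) and γ ∈ (0,1), and define greedy times τ₀ = min I, τ_{i+1} = inf{ t > τ_i : ⦀x⦀_{α,[τ_i,t]} = γ } ∧ max I, and let N = sup{ i : τ_i < max I } be the number of greedy times. Then N ≤ |I| · γ^{-1/(ν-α)} · (⦀x⦀_{ν,I})^{1/(ν-α)}, where |I| = max I − min I. -/
/-- The `α`-Hölder seminorm of a path `x` on the interval `[s, t]`: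
`sup_{s ≤ u < v ≤ t} ‖x v - x u‖ / (v - u) ^ α`. -/
noncomputable def holderSemi {E : Type*} [NormedAddCommGroup E]
    (α s t : ℝ) (x : ℝ → E) : ℝ :=
  sSup {r : ℝ | ∃ u v, s ≤ u ∧ u < v ∧ v ≤ t ∧ r = ‖x v - x u‖ / (v - u) ^ α}

/-- Bound on the number of greedy times for the `α`-Hölder seminorm of a
`ν`-Hölder path: if `τ 0 = a`, `τ` is monotone, stays in `[a, b]`, and
`⦀x⦀_{α,[τ i, τ (i+1)]} = γ` whenever `τ (i+1) < b`, then the number `N` of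
greedy times satisfies `N ≤ (b - a) γ^{-1/(ν-α)} ⦀x⦀_{ν,[a,b]}^{1/(ν-α)}`. -/
theorem greedy_times_bound {m : ℕ} (a b ν α γ : ℝ) (hab : a ≤ b)
    (hα : 0 < α) (hαν : α < ν) (hν : ν ≤ 1) (hγ0 : 0 < γ) (hγ1 : γ < 1)
    (x : ℝ → EuclideanSpace ℝ (Fin m))
    (hx : ∀ u v, a ≤ u → u ≤ v → v ≤ b → ‖x v - x u‖ ≤ holderSemi ν a b x * (v - u) ^ ν)
    (τ : ℕ → ℝ) (hτ0 : τ 0 = a) (hmono : Monotone τ) (hτb : ∀ i, τ i ≤ b)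
    (hgreedy : ∀ i, τ (i + 1) < b → holderSemi α (τ i) (τ (i + 1)) x = γ)
    (N : ℕ) (hN : τ N < b) :
    (N : ℝ) ≤ (b - a) * γ ^ (-(ν - α)⁻¹) * holderSemi ν a b x ^ (ν - α)⁻¹ := by
  set M := holderSemi ν a b x with hM
  have hνα : (0:ℝ) < ν - α := by linarith
  set e := (ν - α)⁻¹ with he
  have he0 : (0:ℝ) < e := inv_pos.mpr hνα
  have hM0 : 0 ≤ M := by
    apply Real.sSup_nonneg
    rintro r ⟨u, v, _, huv, _, rfl⟩
    have : (0:ℝ) < (v - u) ^ ν := Real.rpow_pos_of_pos (by linarith) _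
    exact div_nonneg (norm_nonneg _) this.le
  -- key step: for each i < N, γ ^ e ≤ (τ (i+1) - τ i) * M ^ e
  have key : ∀ i < N, γ ^ e ≤ (τ (i + 1) - τ i) * M ^ e := by
    intro i hi
    have hib : τ (i + 1) < b := lt_of_le_of_lt (hmono (Nat.succ_le_of_lt hi)) hN
    have hg := hgreedy i hib
    set S := {r : ℝ | ∃ u v, τ i ≤ u ∧ u < v ∧ v ≤ τ (i + 1) ∧
        r = ‖x v - x u‖ / (v - u) ^ α} with hS
    have hSne : S.Nonempty := by
      by_contra h
      rw [Set.not_nonempty_iff_eq_empty] at h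
      have h0 : holderSemi α (τ i) (τ (i + 1)) x = 0 := by
        rw [holderSemi, ← hS, h, Real.sSup_empty]
      rw [hg] at h0
      linarith
    obtain ⟨r0, u0, v0, hu0, huv0, hv0, _⟩ := hSne
    have hδ : 0 < τ (i + 1) - τ i := by
      have : τ i < τ (i + 1) := lt_of_le_of_lt hu0 (lt_of_lt_of_le huv0 hv0)
      linarith
    -- γ ≤ M * δ ^ (ν - α)
    have hbound : γ ≤ M * (τ (i + 1) - τ i) ^ (ν - α) := by
      rw [← hg]
      apply Real.sSup_le
      · rintro r ⟨u, v, hu, huv, hv, rfl⟩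
        have hvu : (0:ℝ) < v - u := by linarith
        have hua : a ≤ u := hτ0 ▸ le_trans (hmono (Nat.zero_le i)) hu
        have hvb : v ≤ b := le_trans hv (hτb _)
        have hxx := hx u v hua (le_of_lt huv) hvb
        have hpow : (0:ℝ) < (v - u) ^ α := Real.rpow_pos_of_pos hvu _
        have h1 : ‖x v - x u‖ / (v - u) ^ α ≤ M * (v - u) ^ ν / (v - u) ^ α :=
          div_le_div_of_nonneg_right hxx hpow.le
        refine h1.trans ?_
        rw [mul_div_assoc, ← Real.rpow_sub hvu]
        have h2 : (v - u) ^ (ν - α) ≤ (τ (i + 1) - τ i) ^ (ν - α) := by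
          apply Real.rpow_le_rpow (le_of_lt hvu) _ (le_of_lt hνα)
          linarith
        exact mul_le_mul_of_nonneg_left h2 hM0
      · positivity
    -- take both sides to the power e
    have h3 := Real.rpow_le_rpow (le_of_lt hγ0) hbound (le_of_lt he0)
    rwa [Real.mul_rpow hM0 (Real.rpow_nonneg hδ.le _),
      ← Real.rpow_mul hδ.le, he, mul_inv_cancel₀ hνα.ne', Real.rpow_one,
      mul_comm] at h3
  -- sum over i < N
  have hsum : (N : ℝ) * γ ^ e ≤ (b - a) * M ^ e := by
    have h1 : (N : ℝ) * γ ^ e = ∑ i ∈ Finset.range N, γ ^ e := by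
      rw [Finset.sum_const, Finset.card_range, nsmul_eq_mul]
    have h2 : ∑ i ∈ Finset.range N, γ ^ e
        ≤ ∑ i ∈ Finset.range N, (τ (i + 1) - τ i) * M ^ e := by
      apply Finset.sum_le_sum
      intro i hi
      exact key i (Finset.mem_range.mp hi)
    have h3 : ∑ i ∈ Finset.range N, (τ (i + 1) - τ i) * M ^ e
        = (τ N - τ 0) * M ^ e := by
      rw [← Finset.sum_mul, Finset.sum_range_sub]
    have h4 : (τ N - τ 0) * M ^ e ≤ (b - a) * M ^ e := by
      apply mul_le_mul_of_nonneg_right _ (Real.rpow_nonneg hM0 _)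
      rw [hτ0]
      linarith [hN]
    rw [h1]
    exact le_trans h2 (h3 ▸ h4)
  have hγe : (0:ℝ) < γ ^ e := Real.rpow_pos_of_pos hγ0 _
  rw [Real.rpow_neg hγ0.le]
  calc (N : ℝ) = (N : ℝ) * γ ^ e * (γ ^ e)⁻¹ := by field_simp
    _ ≤ (b - a) * M ^ e * (γ ^ e)⁻¹ :=
        mul_le_mul_of_nonneg_right hsum (inv_nonneg.mpr hγe.le)
    _ = (b - a) * (γ ^ e)⁻¹ * M ^ e := by ring
end

section
/- Let H: ℝ₊ → ℝ₊ be a continuous increasing function, ε > 0, and δ > 0 such that H(δ e^{c}) + c < H(0) + ε where c = C_g κ₂(δ) ≥ 0. Suppose z: [m, m+1] → ℝ is continuous with z_t ≤ z_m + c + ∫_m^t [H(e^{z_s}) − (H(0)+ε)] ds for all t ∈ [m, m+1], and z_m < log δ. Then z_t < log δ + c for all t ∈ [m, m+1], and z_{m+1} ≤ z_m − [H(0) + ε − H(δ e^{c}) − c] < z_m < log δ. -/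
/-- Continuous bootstrap argument of the local stability lemma: if `H` is
continuous and increasing, `c ≥ 0`, `ε > 0`, `δ > 0` with
`H(δ e^c) + c < H(0) + ε`, `z` is continuous on `[m, m+1]` with
`z_t ≤ z_m + c + ∫_m^t (H(e^{z_s}) − (H(0)+ε)) ds` and `z_m < log δ`, then
`z_t < log δ + c` on `[m, m+1]` and
`z_{m+1} ≤ z_m − (H(0) + ε − H(δ e^c) − c) < z_m`. -/
theorem local_stability_bootstrap (H : ℝ → ℝ) (hHc : Continuous H)
    (hHmono : Monotone H) (c ε δ m : ℝ) (hc : 0 ≤ c) (hε : 0 < ε) (hδ : 0 < δ)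
    (hkey : H (δ * Real.exp c) + c < H 0 + ε)
    (z : ℝ → ℝ) (hzc : ContinuousOn z (Set.Icc m (m + 1)))
    (hz : ∀ t ∈ Set.Icc m (m + 1),
      z t ≤ z m + c + ∫ s in m..t, (H (Real.exp (z s)) - (H 0 + ε)))
    (hm : z m < Real.log δ) :
    (∀ t ∈ Set.Icc m (m + 1), z t < Real.log δ + c) ∧
    z (m + 1) ≤ z m - (H 0 + ε - H (δ * Real.exp c) - c) ∧
    z (m + 1) < z m := by
  have key : ∀ t ∈ Set.Icc m (m + 1), (∀ s ∈ Set.Icc m t, z s ≤ Real.log δ + c) →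
      z t ≤ z m + c - (H 0 + ε - H (δ * Real.exp c)) * (t - m) := by
    intro t ht hs
    have hmt : m ≤ t := ht.1
    have hsub : Set.uIcc m t ⊆ Set.Icc m (m + 1) := by
      rw [Set.uIcc_of_le hmt]
      exact Set.Icc_subset_Icc le_rfl ht.2
    have hint : IntervalIntegrable (fun s => H (Real.exp (z s)) - (H 0 + ε))
        MeasureTheory.volume m t := by
      apply ContinuousOn.intervalIntegrable
      exact ((hHc.comp_continuousOn
        (Real.continuous_exp.comp_continuousOn (hzc.mono hsub)))).sub continuousOn_const
    have hb : (∫ s in m..t, (H (Real.exp (z s)) - (H 0 + ε))) ≤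
        ∫ s in m..t, (H (δ * Real.exp c) - (H 0 + ε)) := by
      apply intervalIntegral.integral_mono_on hmt hint intervalIntegrable_const
      intro s hs'
      have h1 : Real.exp (z s) ≤ δ * Real.exp c := by
        have := Real.exp_le_exp.2 (hs s hs')
        rwa [Real.exp_add, Real.exp_log hδ] at this
      exact sub_le_sub_right (hHmono h1) _
    have h2 := hz t ht
    rw [intervalIntegral.integral_const, smul_eq_mul] at hb
    nlinarith
  have main : ∀ t ∈ Set.Icc m (m + 1), z t < Real.log δ + c := by
    by_contra hcon
    push_neg at hcon
    obtain ⟨t1, ht1, ht1'⟩ := hcon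
    set B := {t | t ∈ Set.Icc m (m + 1) ∧ Real.log δ + c ≤ z t} with hBdef
    have hBne : B.Nonempty := ⟨t1, ht1, ht1'⟩
    have hBclosed : IsClosed B := by
      have : B = Set.Icc m (m + 1) ∩ z ⁻¹' Set.Ici (Real.log δ + c) := by
        ext x; simp [hBdef, Set.mem_Ici]
      rw [this]
      exact ContinuousOn.preimage_isClosed_of_isClosed hzc isClosed_Icc isClosed_Ici
    have hbdd : BddBelow B := ⟨m, fun x hx => hx.1.1⟩
    set t0 := sInf B with ht0def
    have ht0B : t0 ∈ B := hBclosed.csInf_mem hBne hbdd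
    have ht0 : t0 ∈ Set.Icc m (m + 1) := ht0B.1
    have hmt0 : m < t0 := by
      rcases eq_or_lt_of_le ht0.1 with h | h
      · exfalso; have := ht0B.2; rw [← h] at this; linarith
      · exact h
    have hlt : ∀ s ∈ Set.Ico m t0, z s < Real.log δ + c := by
      intro s hs
      by_contra h
      push_neg at h
      have hsB : s ∈ B := ⟨⟨hs.1, le_trans hs.2.le ht0.2⟩, h⟩
      exact absurd (csInf_le hbdd hsB) (not_le.2 hs.2)
    have hle : z t0 ≤ Real.log δ + c := by
      have hne : (nhdsWithin t0 (Set.Ico m t0)).NeBot := right_nhdsWithin_Ico_neBot hmt0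
      have htend : Filter.Tendsto z (nhdsWithin t0 (Set.Ico m t0)) (nhds (z t0)) :=
        (hzc t0 ht0).mono (fun x hx => ⟨hx.1, le_trans hx.2.le ht0.2⟩)
      exact le_of_tendsto htend (Filter.eventually_of_mem self_mem_nhdsWithin
        fun s hs => (hlt s hs).le)
    have hall : ∀ s ∈ Set.Icc m t0, z s ≤ Real.log δ + c := by
      intro s hs
      rcases eq_or_lt_of_le hs.2 with h | h
      · rw [h]; exact hle
      · exact (hlt s ⟨hs.1, h⟩).le
    have hk := key t0 ht0 hall
    have hK : (0:ℝ) < H 0 + ε - H (δ * Real.exp c) := by linarith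
    nlinarith [mul_nonneg hK.le (sub_nonneg.2 ht0.1), ht0B.2]
  refine ⟨main, ?_, ?_⟩ <;>
  · have h1 : m + 1 ∈ Set.Icc m (m + 1) := by constructor <;> linarith
    have hk := key (m + 1) h1 (fun s hs => (main s ⟨hs.1, hs.2⟩).le)
    linarith
end
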